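/- arXiv:1108.0034 — 4 statements merged into one kernel-verified Lean document; each statement's English description precedes it below -/
import Mathlib

section
/- Let c > 0, 0 ≤ λ < c²/4, α := c/2 + √(c²/4 − λ), and let β₃ > 0, ε > 0. Set δ₁ := αβ₃/(ε(2α − c)) and define u(r) := exp(−αr − δ₁(log r)^(−ε)) for r > 1. If m : (1,∞) → ℝ satisfies m(r) ≥ c − β₃/(r (log r)^(1+ε)) for all r ≥ r₀ (some r₀ > 1), then there exists r₁ ≥ r₀ such that −u''(r) − m(r)u'(r) − λu(r) ≥ 0 for all r ≥ r₁. -/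
/-- First derivative of the inner exponent function. -/
lemma stmt3_aux_phi (α δ₁ ε : ℝ) (r : ℝ) (hr : 1 < r) :
    HasDerivAt (fun x => -α*x - δ₁*(Real.log x)^(-ε))
      (-α + ε*δ₁ * ((Real.log r)^(-1-ε) * r⁻¹)) r := by
  have hr0 : (0:ℝ) < r := lt_trans one_pos hr
  have hlog : 0 < Real.log r := Real.log_pos hr
  have h1 : HasDerivAt Real.log r⁻¹ r := Real.hasDerivAt_log (ne_of_gt hr0)
  have h2 : HasDerivAt (fun y : ℝ => y ^ (-ε)) ((-ε) * (Real.log r) ^ (-ε - 1)) (Real.log r) :=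
    Real.hasDerivAt_rpow_const (Or.inl hlog.ne')
  have h3 : HasDerivAt (fun x => (Real.log x) ^ (-ε))
      ((-ε) * (Real.log r) ^ (-ε - 1) * r⁻¹) r := h2.comp r h1
  have ha : HasDerivAt (fun x : ℝ => -α*x) (-α) r := by
    simpa using (hasDerivAt_id r).const_mul (-α)
  have h4 := ha.sub (h3.const_mul δ₁)
  refine h4.congr_deriv ?_
  have : (-ε : ℝ) - 1 = -1 - ε := by ring
  rw [this]; ring

/-- First derivative of `g`. -/
lemma stmt3_aux_g (α δ₁ ε : ℝ) (r : ℝ) (hr : 1 < r) :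
    HasDerivAt (fun x => -α + ε*δ₁ * ((Real.log x)^(-1-ε) * x⁻¹))
      (ε*δ₁ * (((-1-ε) * (Real.log r) ^ (-1-ε-1) * r⁻¹) * r⁻¹
        + (Real.log r)^(-1-ε) * (-(r^2)⁻¹))) r := by
  have hr0 : (0:ℝ) < r := lt_trans one_pos hr
  have hlog : 0 < Real.log r := Real.log_pos hr
  have h1 : HasDerivAt Real.log r⁻¹ r := Real.hasDerivAt_log (ne_of_gt hr0)
  have h2 : HasDerivAt (fun y : ℝ => y ^ (-1-ε)) ((-1-ε) * (Real.log r) ^ (-1-ε - 1)) (Real.log r) :=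
    Real.hasDerivAt_rpow_const (Or.inl hlog.ne')
  have h3 : HasDerivAt (fun x => (Real.log x) ^ (-1-ε))
      ((-1-ε) * (Real.log r) ^ (-1-ε-1) * r⁻¹) r := h2.comp r h1
  have hinv : HasDerivAt (fun x : ℝ => x⁻¹) (-(r^2)⁻¹) r := by
    simpa using hasDerivAt_inv (ne_of_gt hr0)
  have h4 := (h3.mul hinv).const_mul (ε*δ₁)
  exact h4.const_add (-α)

theorem stmt3 (c lam β₃ ε r₀ : ℝ) (m : ℝ → ℝ)
    (hc : 0 < c) (hlam0 : 0 ≤ lam) (hlam : lam < c^2/4)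
    (hβ : 0 < β₃) (hε : 0 < ε) (hr₀ : 1 < r₀)
    (α δ₁ : ℝ) (hα : α = c/2 + Real.sqrt (c^2/4 - lam))
    (hδ : δ₁ = α*β₃/(ε*(2*α - c)))
    (u : ℝ → ℝ) (hu : ∀ r, u r = Real.exp (-α*r - δ₁*(Real.log r)^(-ε)))
    (hm : ∀ r, r₀ ≤ r → c - β₃/(r*(Real.log r)^(1+ε)) ≤ m r) :
    ∃ r₁, r₀ ≤ r₁ ∧ ∀ r, r₁ ≤ r →
      0 ≤ -(deriv (deriv u) r) - m r * deriv u r - lam * u r := by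
  -- basic facts about α, δ₁
  have hql : (0:ℝ) < c^2/4 - lam := by linarith
  have hqpos : 0 < Real.sqrt (c^2/4 - lam) := Real.sqrt_pos.2 hql
  have hqsq : Real.sqrt (c^2/4 - lam) ^ 2 = c^2/4 - lam := Real.sq_sqrt hql.le
  have hα0 : 0 < α := by rw [hα]; positivity
  have h2αc : 0 < 2*α - c := by rw [hα]; linarith
  have hid1 : α^2 - c*α + lam = 0 := by rw [hα]; linear_combination hqsq
  have hid2 : (2*α - c) * (ε*δ₁) = α*β₃ := by
    rw [hδ]; field_simp
  have hδ0 : 0 < δ₁ := by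
    rw [hδ]; exact div_pos (mul_pos hα0 hβ) (mul_pos hε h2αc)
  -- functions
  set U : ℝ → ℝ := fun x => Real.exp (-α*x - δ₁*(Real.log x)^(-ε)) with hU
  have huU : u = U := funext hu
  set g : ℝ → ℝ := fun x => -α + ε*δ₁ * ((Real.log x)^(-1-ε) * x⁻¹) with hg
  -- derivative of U
  have hUd : ∀ r : ℝ, 1 < r → HasDerivAt U (U r * g r) r := by
    intro r hr
    exact (stmt3_aux_phi α δ₁ ε r hr).exp
  have hderivU : ∀ r : ℝ, 1 < r → deriv U r = U r * g r := fun r hr => (hUd r hr).deriv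
  -- second derivative
  have hderiv2 : ∀ r : ℝ, 1 < r → deriv (deriv U) r
      = U r * g r * g r + U r * (ε*δ₁ * (((-1-ε) * (Real.log r) ^ (-1-ε-1) * r⁻¹) * r⁻¹
        + (Real.log r)^(-1-ε) * (-(r^2)⁻¹))) := by
    intro r hr
    have hev : deriv U =ᶠ[nhds r] fun x => U x * g x := by
      filter_upwards [eventually_gt_nhds hr] with x hx using hderivU x hx
    rw [hev.deriv_eq]
    exact ((hUd r hr).mul (stmt3_aux_g α δ₁ ε r hr)).deriv
  -- choose r₁
  refine ⟨max r₀ (Real.exp (1 + ε*δ₁ + ε*δ₁/α)), le_max_left _ _, ?_⟩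
  intro r hr
  have hrr₀ : r₀ ≤ r := le_trans (le_max_left _ _) hr
  have hr1 : 1 < r := lt_of_lt_of_le hr₀ hrr₀
  have hr0 : (0:ℝ) < r := lt_trans one_pos hr1
  have hlogb : 1 + ε*δ₁ + ε*δ₁/α ≤ Real.log r := by
    rw [Real.le_log_iff_exp_le hr0]
    exact le_trans (le_max_right _ _) hr
  have hεδ0 : 0 < ε*δ₁ := mul_pos hε hδ0
  have hεδα0 : 0 < ε*δ₁/α := div_pos hεδ0 hα0
  have hmr := hm r hrr₀
  -- rewrite the goal
  rw [huU, hderiv2 r hr1, hderivU r hr1]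
  -- now abbreviate
  set l := Real.log r with hl
  have hl1 : 1 ≤ l := by linarith
  have hl0 : 0 < l := by linarith
  have hlεδ : ε*δ₁ ≤ l := by linarith
  have hlεδα : ε*δ₁ ≤ α * l := by
    have h1 : ε*δ₁/α ≤ l := by linarith
    calc ε*δ₁ = α * (ε*δ₁/α) := by field_simp
    _ ≤ α * l := mul_le_mul_of_nonneg_left h1 hα0.le
  set A := l ^ (1+ε) with hA
  have hlA : l ≤ A := by
    have := Real.rpow_le_rpow_of_exponent_le hl1 (by linarith : (1:ℝ) ≤ 1+ε)
    rwa [Real.rpow_one] at this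
  have hA0 : 0 < A := lt_of_lt_of_le hl0 hlA
  -- rpow rewrites
  have hArw : l ^ (-1-ε) = A⁻¹ := by
    rw [show (-1-ε : ℝ) = -(1+ε) by ring, Real.rpow_neg hl0.le, hA]
  have hArw2 : l ^ (-1-ε-1) = A⁻¹ * l⁻¹ := by
    rw [show (-1-ε-1 : ℝ) = (-1-ε) + (-1) by ring, Real.rpow_add hl0, hArw, Real.rpow_neg_one]
  rw [hArw, hArw2]
  rw [show ((r:ℝ)^2)⁻¹ = r⁻¹^2 by rw [← inv_pow]]
  set x := r⁻¹ with hx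
  have hx0 : 0 < x := inv_pos.2 hr0
  have hx1 : x ≤ 1 := by
    rw [hx]
    exact inv_le_one_of_one_le₀ hr1.le
  set a := A⁻¹ with ha
  have ha0 : 0 < a := inv_pos.2 hA0
  set t := l⁻¹ with ht
  have ht0 : 0 < t := inv_pos.2 hl0
  set s := ε*δ₁ * (a * x) with hs
  have hs0 : 0 < s := by positivity
  have hεδa : ε*δ₁ * a ≤ 1 := by
    rw [ha]
    calc ε*δ₁ * A⁻¹ ≤ A * A⁻¹ :=
          mul_le_mul_of_nonneg_right (le_trans hlεδ hlA) (inv_pos.2 hA0).le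
      _ = 1 := mul_inv_cancel₀ hA0.ne'
  have hsx : s ≤ x := by
    calc s = (ε*δ₁*a) * x := by rw [hs]; ring
      _ ≤ 1 * x := mul_le_mul_of_nonneg_right hεδa hx0.le
      _ = x := one_mul x
  have hεδaα : ε*δ₁ * a ≤ α := by
    rw [ha]
    calc ε*δ₁ * A⁻¹ ≤ (α*A) * A⁻¹ :=
          mul_le_mul_of_nonneg_right
            (le_trans hlεδα (mul_le_mul_of_nonneg_left hlA hα0.le)) (inv_pos.2 hA0).le
      _ = α := by field_simp
  have hsα : s ≤ α := by
    calc s = (ε*δ₁*a) * x := by rw [hs]; ring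
      _ ≤ α * 1 := mul_le_mul hεδaα hx1 hx0.le hα0.le
      _ = α := mul_one α
  -- value of g
  have hgval : g r = -α + s := by
    have hgr : g r = -α + ε * δ₁ * (l ^ (-1-ε) * r⁻¹) := rfl
    rw [hgr, hArw, ← hx, hs]
  have hgle : g r ≤ 0 := by rw [hgval]; linarith
  have hU0 : 0 < U r := Real.exp_pos _
  -- the bound on m
  have hB : c - β₃ * (a*x) ≤ m r := by
    have hrw : β₃/(r * A) = β₃ * (a*x) := by
      rw [div_eq_mul_inv, mul_inv, ← ha, ← hx]
      ring
    rwa [hrw] at hmr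
  -- key pointwise inequality
  have key : 0 ≤ -(g r * g r + ε*δ₁ * ((-1-ε) * (a * t) * x * x + a * -(x^2)))
      - m r * g r - lam := by
    have hmg : m r * g r ≤ (c - β₃*(a*x)) * g r :=
      mul_le_mul_of_nonpos_right hB hgle
    have hfact : -(g r * g r + ε*δ₁ * ((-1-ε) * (a * t) * x * x + a * -(x^2)))
        - (c - β₃*(a*x)) * g r - lam
        = s*(x - s) + s*x*((1+ε)*t + β₃*a) := by
      rw [hgval, hs]
      linear_combination (-1 : ℝ) * hid1 + (a*x) * hid2
    have h1 : 0 ≤ s*(x-s) := mul_nonneg hs0.le (by linarith)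
    have h2 : 0 ≤ s*x*((1+ε)*t + β₃*a) := by positivity
    linarith
  have expand : -(U r * g r * g r + U r * (ε*δ₁ * ((-1-ε) * (a * t) * x * x + a * -(x^2))))
      - m r * (U r * g r) - lam * U r
      = U r * (-(g r * g r + ε*δ₁ * ((-1-ε) * (a * t) * x * x + a * -(x^2)))
        - m r * g r - lam) := by ring
  calc (0:ℝ) ≤ U r * (-(g r * g r + ε*δ₁ * ((-1-ε) * (a * t) * x * x + a * -(x^2)))
        - m r * g r - lam) := mul_nonneg hU0.le key
    _ = _ := by rw [← expand]
end

section
/- Let β > 0, 0 ≤ λ < β²/4, set α̃ := β/2 − √(β²/4 − λ), let c₁ > 0 and δ > 0, and fix ε with 0 < ε < δ. Define w(r) := exp(α̃r − (log r)^(−ε)) for r > 1. If m : (1,∞) → ℝ satisfies m(r) ≤ −β + c₁/(r(log r)^(1+δ)) for r ≥ r₀ > 1, then there exists r₁ ≥ r₀ such that −w''(r) − m(r)w'(r) − λw(r) ≥ 0 for all r ≥ r₁. -/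
open Real Filter

theorem stmt4_aux (s ε c₁ α' r P D : ℝ) (hr : 0 < r) (hP : 0 < P) (hD : 0 < D)
    (hbd : ε^2/(r*P) + c₁*α'/D + c₁*ε/(r*(P*D)) ≤ 2*s*ε) :
    0 ≤ 2*s*(ε/(r*P)) - (ε/(r*P))^2 - (c₁/(r*(P*D)))*α' - (c₁/(r*(P*D)))*(ε/(r*P)) := by
  have h0 : 0 ≤ (r*P)⁻¹ * (2*s*ε - (ε^2/(r*P) + c₁*α'/D + c₁*ε/(r*(P*D)))) :=
    mul_nonneg (by positivity) (by linarith)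
  have heq : 2*s*(ε/(r*P)) - (ε/(r*P))^2 - (c₁/(r*(P*D)))*α' - (c₁/(r*(P*D)))*(ε/(r*P))
      = (r*P)⁻¹ * (2*s*ε - (ε^2/(r*P) + c₁*α'/D + c₁*ε/(r*(P*D)))) := by
    field_simp
    ring
  rw [heq]; exact h0

set_option maxHeartbeats 1000000 in
theorem stmt4 (β lam c₁ δ ε r₀ : ℝ) (m : ℝ → ℝ)
    (hβ : 0 < β) (hlam0 : 0 ≤ lam) (hlam : lam < β^2/4)
    (hc₁ : 0 < c₁) (hδ : 0 < δ) (hε : 0 < ε) (hεδ : ε < δ) (hr₀ : 1 < r₀)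
    (α' : ℝ) (hα : α' = β/2 - Real.sqrt (β^2/4 - lam))
    (w : ℝ → ℝ) (hw : ∀ r, w r = Real.exp (α'*r - (Real.log r)^(-ε)))
    (hm : ∀ r, r₀ ≤ r → m r ≤ -β + c₁/(r*(Real.log r)^(1+δ))) :
    ∃ r₁, r₀ ≤ r₁ ∧ ∀ r, r₁ ≤ r →
      0 ≤ -(deriv (deriv w) r) - m r * deriv w r - lam * w r := by
  -- basic constants
  set s := Real.sqrt (β^2/4 - lam) with hs_def
  have hs2 : s^2 = β^2/4 - lam := Real.sq_sqrt (by linarith)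
  have hs : 0 < s := Real.sqrt_pos.mpr (by linarith)
  have hα0 : 0 ≤ α' := by nlinarith [hs.le]
  have hroot : α'^2 - β*α' + lam = 0 := by rw [hα]; nlinarith [hs2]
  have hβ2α : β - 2*α' = 2*s := by rw [hα]; ring
  -- derivative of (log x)^p
  have hDp : ∀ (p r : ℝ), 1 < r →
      HasDerivAt (fun x => (Real.log x)^p) (p * (Real.log r)^(p-1) * r⁻¹) r := by
    intro p r hr
    have h0 : Real.log r ≠ 0 := ne_of_gt (Real.log_pos hr)
    have hr0 : r ≠ 0 := ne_of_gt (lt_trans one_pos hr)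
    have := (Real.hasDerivAt_rpow_const (p := p) (Or.inl h0)).comp r (Real.hasDerivAt_log hr0)
    exact this
  -- the functions u, φ'
  set u : ℝ → ℝ := fun r => ε * ((Real.log r)^(-ε-1) * r⁻¹) with hu_def
  set φ : ℝ → ℝ := fun r => α' + u r with hφ_def
  set ψ : ℝ → ℝ := fun r => ε * ((-ε-1) * (Real.log r)^(-ε-1-1) * r⁻¹ * r⁻¹
      + (Real.log r)^(-ε-1) * -(r^2)⁻¹) with hψ_def
  -- first derivative of w
  have hW1 : ∀ r, 1 < r → HasDerivAt w (φ r * w r) r := by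
    intro r hr
    have h1 : HasDerivAt (fun x : ℝ => α'*x - (Real.log x)^(-ε))
        (α'*1 - (-ε) * (Real.log r)^(-ε-1) * r⁻¹) r :=
      ((hasDerivAt_id r).const_mul α').sub (hDp (-ε) r hr)
    have h3 : HasDerivAt w (Real.exp (α'*r - (Real.log r)^(-ε)) *
        (α'*1 - (-ε) * (Real.log r)^(-ε-1) * r⁻¹)) r :=
      h1.exp.congr_of_eventuallyEq (Filter.Eventually.of_forall fun x => hw x)
    convert h3 using 1
    rw [hw r, hφ_def, hu_def]
    ring
  -- derivative of φ * w
  have hW2 : ∀ r, 1 < r → HasDerivAt (fun x => φ x * w x)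
      (ψ r * w r + φ r * (φ r * w r)) r := by
    intro r hr
    have hr0 : r ≠ 0 := ne_of_gt (lt_trans one_pos hr)
    have hA := hDp (-ε-1) r hr
    have hB := hasDerivAt_inv hr0
    have hInner := hA.mul hB
    have hφd : HasDerivAt φ (ψ r) r := by
      have h := (hInner.const_mul ε).const_add α'
      exact h
    exact hφd.mul (hW1 r hr)
  -- the tendsto part
  have hL1 : Tendsto (fun r : ℝ => (Real.log r)^(1+ε)) atTop atTop := by
    have := (tendsto_rpow_atTop (y := 1+ε) (by linarith)).comp Real.tendsto_log_atTop
    exact this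
  have hL2 : Tendsto (fun r : ℝ => (Real.log r)^(δ-ε)) atTop atTop := by
    have := (tendsto_rpow_atTop (y := δ-ε) (by linarith)).comp Real.tendsto_log_atTop
    exact this
  have hL3 : Tendsto (fun r : ℝ => (Real.log r)^(1+δ)) atTop atTop := by
    have := (tendsto_rpow_atTop (y := 1+δ) (by linarith)).comp Real.tendsto_log_atTop
    exact this
  have t1 : Tendsto (fun r : ℝ => ε^2/(r*(Real.log r)^(1+ε))) atTop (nhds 0) := by
    have := ((tendsto_id.atTop_mul_atTop₀ hL1).inv_tendsto_atTop).const_mul (ε^2)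
    simpa [div_eq_mul_inv] using this
  have t2 : Tendsto (fun r : ℝ => c₁*α'/((Real.log r)^(δ-ε))) atTop (nhds 0) := by
    have := (hL2.inv_tendsto_atTop).const_mul (c₁*α')
    simpa [div_eq_mul_inv] using this
  have t3 : Tendsto (fun r : ℝ => c₁*ε/(r*(Real.log r)^(1+δ))) atTop (nhds 0) := by
    have := ((tendsto_id.atTop_mul_atTop₀ hL3).inv_tendsto_atTop).const_mul (c₁*ε)
    simpa [div_eq_mul_inv] using this
  have tend : Tendsto (fun r : ℝ => ε^2/(r*(Real.log r)^(1+ε)) + c₁*α'/((Real.log r)^(δ-ε))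
      + c₁*ε/(r*(Real.log r)^(1+δ))) atTop (nhds 0) := by
    have := (t1.add t2).add t3
    simpa using this
  have hEvbd : ∀ᶠ r in atTop, ε^2/(r*(Real.log r)^(1+ε)) + c₁*α'/((Real.log r)^(δ-ε))
      + c₁*ε/(r*(Real.log r)^(1+δ)) ≤ 2*s*ε :=
    (tend.eventually_lt_const (by positivity)).mono fun x hx => hx.le
  have hEv : ∀ᶠ r in atTop, (1 < r ∧ r₀ ≤ r) ∧ ε^2/(r*(Real.log r)^(1+ε))
      + c₁*α'/((Real.log r)^(δ-ε)) + c₁*ε/(r*(Real.log r)^(1+δ)) ≤ 2*s*ε :=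
    ((eventually_gt_atTop 1).and (eventually_ge_atTop r₀)).and hEvbd
  obtain ⟨a, ha⟩ := eventually_atTop.mp hEv
  refine ⟨max a r₀, le_max_right _ _, ?_⟩
  intro r hr
  obtain ⟨⟨hr1, hrr0⟩, hbd⟩ := ha r (le_trans (le_max_left _ _) hr)
  -- set up local facts
  have hr0 : (0:ℝ) < r := lt_trans one_pos hr1
  have hL : 0 < Real.log r := Real.log_pos hr1
  have hP : 0 < (Real.log r)^(1+ε) := Real.rpow_pos_of_pos hL _
  have hQ : 0 < (Real.log r)^(1+δ) := Real.rpow_pos_of_pos hL _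
  have hD : 0 < (Real.log r)^(δ-ε) := Real.rpow_pos_of_pos hL _
  have hwpos : 0 < w r := by rw [hw]; exact Real.exp_pos _
  -- rewrite the derivatives
  have hEvd : deriv w =ᶠ[nhds r] fun x => φ x * w x :=
    Filter.eventuallyEq_of_mem (isOpen_Ioi.mem_nhds hr1) fun x hx => (hW1 x hx).deriv
  have hd1 : deriv w r = φ r * w r := (hW1 r hr1).deriv
  have hd2 : deriv (deriv w) r = ψ r * w r + φ r * (φ r * w r) := by
    rw [hEvd.deriv_eq]
    exact (hW2 r hr1).deriv
  rw [hd1, hd2]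
  clear_value s u φ ψ
  -- key scalar inequality
  have hPQ : (Real.log r)^(1+δ) = (Real.log r)^(1+ε) * (Real.log r)^(δ-ε) := by
    rw [← Real.rpow_add hL]; congr 1; ring
  have hu' : u r = ε / (r * (Real.log r)^(1+ε)) := by
    have he : (-ε-1 : ℝ) = -(1+ε) := by ring
    rw [hu_def]
    simp only
    rw [he, Real.rpow_neg hL.le, div_eq_mul_inv, mul_inv]
    ring
  have hT : 0 ≤ 2*s*u r - u r^2 - (c₁/(r*(Real.log r)^(1+δ)))*α'
      - (c₁/(r*(Real.log r)^(1+δ)))*u r := by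
    rw [hu', hPQ]
    rw [hPQ] at hbd
    exact stmt4_aux s ε c₁ α' r _ _ hr0 hP hD hbd
  -- positivity of pieces
  have hupos : 0 < u r := by
    rw [hu']; positivity
  have hφpos : 0 < φ r := by rw [hφ_def]; simp only; linarith
  have hcpos : 0 < c₁/(r*(Real.log r)^(1+δ)) := by positivity
  have hψle : ψ r ≤ 0 := by
    rw [hψ_def]
    simp only
    have ha1 : (0:ℝ) ≤ (Real.log r)^(-ε-1-1) := (Real.rpow_pos_of_pos hL _).le
    have ha2 : (0:ℝ) ≤ (Real.log r)^(-ε-1) := (Real.rpow_pos_of_pos hL _).le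
    have hi : (0:ℝ) ≤ r⁻¹ := (inv_pos.mpr hr0).le
    have hi2 : (0:ℝ) ≤ (r^2)⁻¹ := by positivity
    have h1 : (-ε-1) * (Real.log r)^(-ε-1-1) * r⁻¹ * r⁻¹ ≤ 0 := by
      have : (0:ℝ) ≤ (ε+1) * (Real.log r)^(-ε-1-1) * r⁻¹ * r⁻¹ :=
        mul_nonneg (mul_nonneg (mul_nonneg (by linarith) ha1) hi) hi
      nlinarith
    have h2 : (Real.log r)^(-ε-1) * -(r^2)⁻¹ ≤ 0 := by nlinarith
    nlinarith
  -- the bound on m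
  have hmr : m r ≤ -β + c₁/(r*(Real.log r)^(1+δ)) := hm r hrr0
  -- combine
  have key : 0 ≤ -ψ r - φ r^2 - m r * φ r - lam := by
    have hmul : m r * φ r ≤ (-β + c₁/(r*(Real.log r)^(1+δ))) * φ r :=
      mul_le_mul_of_nonneg_right hmr hφpos.le
    have e1 : (β - c₁/(r*(Real.log r)^(1+δ))) * φ r - φ r ^ 2 - lam
        = 2*s*u r - u r^2 - (c₁/(r*(Real.log r)^(1+δ)))*α'
        - (c₁/(r*(Real.log r)^(1+δ)))*u r := by
      have hφr : φ r = α' + u r := by rw [hφ_def]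
      rw [hφr]
      linear_combination (-1) * hroot + u r * hβ2α
    have h4 : (β - c₁/(r*(Real.log r)^(1+δ))) * φ r ≤ -(m r * φ r) := by
      have hx : (β - c₁/(r*(Real.log r)^(1+δ))) * φ r
          = -((-β + c₁/(r*(Real.log r)^(1+δ))) * φ r) := by ring
      rw [hx]
      exact neg_le_neg hmul
    have h5 : 0 ≤ (β - c₁/(r*(Real.log r)^(1+δ))) * φ r - φ r^2 - lam := by
      rw [e1]; exact hT
    linarith [h4, h5, hψle]
  have hfin : -(ψ r * w r + φ r * (φ r * w r)) - m r * (φ r * w r) - lam * w r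
      = (-ψ r - φ r^2 - m r * φ r - lam) * w r := by ring
  rw [hfin]
  exact mul_nonneg key hwpos.le
end

section
/- Let c > 0, 0 ≤ λ < c²/4, α₀ := c/2 + √(c²/4 − λ), let C₁ > 0, δ > 0, and fix ε with 0 < ε < δ. Define v(r) := exp(−α₀r + (log r)^(−ε)) for r > 1. If m : (1,∞) → ℝ satisfies m(r) ≤ c + C₁/(r(log r)^(1+δ)) for r ≥ r₀ > 1, then there exists r₁ ≥ r₀ such that −v''(r) − m(r)v'(r) − λv(r) ≤ 0 for all r ≥ r₁. -/
open Real

lemma aux_hp (α₀ ε r : ℝ) (hr : 1 < r) :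
    HasDerivAt (fun x : ℝ => -α₀*x + Real.log x ^ (-ε))
      (-α₀ + (-ε) * Real.log r ^ (-ε-1) * r⁻¹) r := by
  have hr0 : r ≠ 0 := by positivity
  have h1 : HasDerivAt Real.log r⁻¹ r := Real.hasDerivAt_log hr0
  have h2 : HasDerivAt (fun x : ℝ => x ^ (-ε)) ((-ε) * (Real.log r) ^ (-ε - 1)) (Real.log r) :=
    Real.hasDerivAt_rpow_const (Or.inl (ne_of_gt (Real.log_pos hr)))
  have h3 := h2.comp r h1
  have h4 : HasDerivAt (fun x : ℝ => -α₀*x) (-α₀) r := by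
    simpa using (hasDerivAt_id r).const_mul (-α₀)
  exact h4.add h3

lemma aux_hp' (α₀ ε r : ℝ) (hr : 1 < r) :
    HasDerivAt (fun x : ℝ => -α₀ + (-ε) * Real.log x ^ (-ε-1) * x⁻¹)
      ((-ε) * ((-ε-1) * Real.log r ^ (-ε-1-1) * r⁻¹) * r⁻¹
        + (-ε) * Real.log r ^ (-ε-1) * (-(r^2)⁻¹)) r := by
  have hr0 : r ≠ 0 := by positivity
  have h1 : HasDerivAt Real.log r⁻¹ r := Real.hasDerivAt_log hr0
  have h2 : HasDerivAt (fun x : ℝ => x ^ (-ε-1)) ((-ε-1) * (Real.log r) ^ (-ε-1-1)) (Real.log r) :=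
    Real.hasDerivAt_rpow_const (Or.inl (ne_of_gt (Real.log_pos hr)))
  have h3 := (h2.comp r h1).const_mul (-ε)
  have h4 : HasDerivAt (fun x : ℝ => x⁻¹) (-(r^2)⁻¹) r := hasDerivAt_inv hr0
  have h5 := h3.mul h4
  have h6 := (hasDerivAt_const r (-α₀)).add h5
  refine h6.congr_deriv ?_
  simp only [Function.comp]
  ring

set_option maxHeartbeats 1000000 in
theorem stmt5 (c lam C₁ δ ε r₀ : ℝ) (m : ℝ → ℝ)
    (hc : 0 < c) (hlam0 : 0 ≤ lam) (hlam : lam < c^2/4)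
    (hC₁ : 0 < C₁) (hδ : 0 < δ) (hε : 0 < ε) (hεδ : ε < δ) (hr₀ : 1 < r₀)
    (α₀ : ℝ) (hα : α₀ = c/2 + Real.sqrt (c^2/4 - lam))
    (v : ℝ → ℝ) (hv : ∀ r, v r = Real.exp (-α₀*r + (Real.log r)^(-ε)))
    (hm : ∀ r, r₀ ≤ r → m r ≤ c + C₁/(r*(Real.log r)^(1+δ))) :
    ∃ r₁, r₀ ≤ r₁ ∧ ∀ r, r₁ ≤ r →
      -(deriv (deriv v) r) - m r * deriv v r - lam * v r ≤ 0 := by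
  have hveq : v = fun x : ℝ => Real.exp (-α₀*x + Real.log x ^ (-ε)) := funext hv
  set s := Real.sqrt (c^2/4 - lam) with hs_def
  have hs : 0 < s := Real.sqrt_pos.2 (by linarith)
  have hs2 : s^2 = c^2/4 - lam := Real.sq_sqrt (by linarith)
  have hα0 : 0 < α₀ := by rw [hα]; positivity
  set K := C₁*(α₀+ε)/(2*s*ε) with hK_def
  have hK : 0 < K := by positivity
  set M := max 1 (K ^ (1/(δ-ε))) with hM_def
  have hM1 : (1:ℝ) ≤ M := le_max_left _ _
  have hδε : 0 < δ - ε := by linarith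
  have hMK : K ≤ M ^ (δ-ε) := by
    have h1 : (K ^ (1/(δ-ε))) ^ (δ-ε) ≤ M ^ (δ-ε) :=
      Real.rpow_le_rpow (Real.rpow_nonneg hK.le _) (le_max_right _ _) hδε.le
    rwa [← Real.rpow_mul hK.le, one_div,
      inv_mul_cancel₀ (ne_of_gt hδε), Real.rpow_one] at h1
  refine ⟨max r₀ (Real.exp M), le_max_left _ _, fun r hr => ?_⟩
  have hrE : Real.exp M ≤ r := le_trans (le_max_right _ _) hr
  have hrr₀ : r₀ ≤ r := le_trans (le_max_left _ _) hr
  have hr1 : 1 < r := lt_of_lt_of_le hr₀ hrr₀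
  have hr0 : 0 < r := by linarith
  have hML : M ≤ Real.log r := (Real.le_log_iff_exp_le hr0).2 hrE
  have hL1 : 1 ≤ Real.log r := le_trans hM1 hML
  have hL0 : 0 < Real.log r := by linarith
  -- first derivative of v, valid on (1, ∞)
  have hdv : ∀ y, 1 < y →
      deriv v y = v y * (-α₀ + (-ε) * Real.log y ^ (-ε-1) * y⁻¹) := by
    intro y hy
    have H := (aux_hp α₀ ε y hy).exp
    rw [← hveq] at H
    rw [← hv y] at H
    exact H.deriv
  have Hv : HasDerivAt v (v r * (-α₀ + (-ε) * Real.log r ^ (-ε-1) * r⁻¹)) r := by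
    have H := (aux_hp α₀ ε r hr1).exp
    rw [← hveq] at H
    rw [← hv r] at H
    exact H
  have hev : deriv v =ᶠ[nhds r]
      fun y => v y * (-α₀ + (-ε) * Real.log y ^ (-ε-1) * y⁻¹) := by
    filter_upwards [isOpen_Ioi.mem_nhds (show r ∈ Set.Ioi (1:ℝ) from hr1)] with y hy
    exact hdv y hy
  have Hd2 : deriv (deriv v) r
      = v r * (-α₀ + (-ε) * Real.log r ^ (-ε-1) * r⁻¹) * (-α₀ + (-ε) * Real.log r ^ (-ε-1) * r⁻¹)
        + v r * ((-ε) * ((-ε-1) * Real.log r ^ (-ε-1-1) * r⁻¹) * r⁻¹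
          + (-ε) * Real.log r ^ (-ε-1) * (-(r^2)⁻¹)) := by
    rw [hev.deriv_eq]
    exact (Hv.mul (aux_hp' α₀ ε r hr1)).deriv
  -- algebraic facts
  have hA0 : 0 < Real.log r ^ (-ε-1) := Real.rpow_pos_of_pos hL0 _
  have hA1 : Real.log r ^ (-ε-1) ≤ 1 :=
    Real.rpow_le_one_of_one_le_of_nonpos hL1 (by linarith)
  have hB0 : 0 < Real.log r ^ (1+δ) := Real.rpow_pos_of_pos hL0 _
  have hAB : Real.log r ^ (-ε-1) * Real.log r ^ (1+δ) = Real.log r ^ (δ-ε) := by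
    rw [← Real.rpow_add hL0]; ring_nf
  have hLM : K ≤ Real.log r ^ (δ-ε) :=
    le_trans hMK (Real.rpow_le_rpow (by positivity) hML hδε.le)
  set w := ε * Real.log r ^ (-ε-1) * r⁻¹ with hw_def
  have hw0 : 0 < w := by positivity
  have hri : r⁻¹ ≤ 1 := by
    rw [inv_le_one_iff₀]; right; exact hr1.le
  have hri0 : 0 < r⁻¹ := inv_pos.2 hr0
  have hwε : w ≤ ε := by
    have h1 : Real.log r ^ (-ε-1) * r⁻¹ ≤ 1 := by
      nlinarith [hA0, hA1, hri, hri0]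
    calc w = ε * (Real.log r ^ (-ε-1) * r⁻¹) := by rw [hw_def]; ring
    _ ≤ ε * 1 := mul_le_mul_of_nonneg_left h1 hε.le
    _ = ε := mul_one ε
  have hkey : C₁/(r * Real.log r ^ (1+δ)) * (α₀ + w) ≤ 2*s*w := by
    have h2 : C₁ * (α₀ + ε) ≤ 2*s*ε * (Real.log r ^ (-ε-1) * Real.log r ^ (1+δ)) := by
      rw [hAB]
      have h3 := mul_le_mul_of_nonneg_left hLM (by positivity : (0:ℝ) ≤ 2*s*ε)
      have h4 : 2*s*ε*K = C₁*(α₀+ε) := by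
        rw [hK_def]; field_simp
      linarith
    rw [div_mul_eq_mul_div, div_le_iff₀ (by positivity : 0 < r * Real.log r ^ (1+δ))]
    have hrr : r⁻¹ * r = 1 := inv_mul_cancel₀ hr0.ne'
    have he : 2*s*w * (r * Real.log r ^ (1+δ))
        = 2*s*ε*(Real.log r ^ (-ε-1) * Real.log r ^ (1+δ)) := by
      rw [hw_def]
      linear_combination (2*s*ε*(Real.log r ^ (-ε-1) * Real.log r ^ (1+δ))) * hrr
    rw [he]
    linarith [mul_le_mul_of_nonneg_left hwε hC₁.le, h2]
  have hA20 : 0 < Real.log r ^ (-ε-1-1) := Real.rpow_pos_of_pos hL0 _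
  have hQ0 : 0 ≤ (-ε) * ((-ε-1) * Real.log r ^ (-ε-1-1) * r⁻¹) * r⁻¹
      + (-ε) * Real.log r ^ (-ε-1) * (-(r^2)⁻¹) := by
    have he : (-ε) * ((-ε-1) * Real.log r ^ (-ε-1-1) * r⁻¹) * r⁻¹
        + (-ε) * Real.log r ^ (-ε-1) * (-(r^2)⁻¹)
        = ε*(ε+1)*(Real.log r ^ (-ε-1-1))*r⁻¹*r⁻¹ + ε*(Real.log r ^ (-ε-1))*(r^2)⁻¹ := by
      ring
    rw [he]; positivity
  have hvpos : 0 < v r := by rw [hv r]; exact Real.exp_pos _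
  have hm' := hm r hrr₀
  have hscal : m r * (α₀ + w) ≤ (c + C₁/(r*Real.log r^(1+δ))) * (α₀+w) :=
    mul_le_mul_of_nonneg_right hm' (by positivity)
  have hαq : α₀^2 - c*α₀ + lam = 0 := by rw [hα]; nlinarith [hs2]
  have h2s : (2*α₀ - c)*w = 2*s*w := by rw [hα]; ring
  have hPw : -α₀ + (-ε) * Real.log r ^ (-ε-1) * r⁻¹ = -(α₀ + w) := by
    rw [hw_def]; ring
  rw [Hd2, hdv r hr1, hPw]
  have hbracket : 0 ≤ (α₀+w)^2
      + ((-ε) * ((-ε-1) * Real.log r ^ (-ε-1-1) * r⁻¹) * r⁻¹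
        + (-ε) * Real.log r ^ (-ε-1) * (-(r^2)⁻¹))
      - m r * (α₀+w) + lam := by
    linarith [hscal, hkey, hQ0, hαq, h2s, sq_nonneg w]
  linarith [mul_nonneg hvpos.le hbracket]
end

section
/- Let c > 0, 0 ≤ λ < c²/4, α := c/2 + √(c²/4 − λ), β₈ > 0, 0 < θ < 1, and ε > 0. Define u(r) := exp(−αr − β₈ r^{1−θ}) for r > 0. If m : (0,∞) → ℝ satisfies m(r) ≥ c + ((2α − c)(1−θ)β₈ + ε)/(α r^θ) for all r ≥ r₀ > 0, then there exists r₁ ≥ r₀ such that −u''(r) − m(r)u'(r) − λu(r) ≥ 0 for all r ≥ r₁. -/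
set_option maxHeartbeats 1000000

theorem stmt15 (c lam β₈ θ ε r₀ : ℝ) (m : ℝ → ℝ)
    (hc : 0 < c) (hlam0 : 0 ≤ lam) (hlam : lam < c^2/4)
    (hβ : 0 < β₈) (hθ0 : 0 < θ) (hθ1 : θ < 1) (hε : 0 < ε) (hr₀ : 0 < r₀)
    (α : ℝ) (hα : α = c/2 + Real.sqrt (c^2/4 - lam))
    (u : ℝ → ℝ) (hu : ∀ r, u r = Real.exp (-α*r - β₈*r^(1-θ)))
    (hm : ∀ r, r₀ ≤ r → c + ((2*α - c)*(1-θ)*β₈ + ε)/(α*r^θ) ≤ m r) :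
    ∃ r₁, r₀ ≤ r₁ ∧ ∀ r, r₁ ≤ r →
      0 ≤ -(deriv (deriv u) r) - m r * deriv u r - lam * u r := by
  have hufun : u = fun r => Real.exp (-α*r - β₈*r^(1-θ)) := funext hu
  subst hufun
  have hs2 : Real.sqrt (c^2/4 - lam) ^ 2 = c^2/4 - lam := Real.sq_sqrt (by linarith)
  have hsn := Real.sqrt_nonneg (c^2/4 - lam)
  have hαpos : 0 < α := by rw [hα]; linarith
  have hα0 : α ≠ 0 := hαpos.ne'
  have hαeq : α^2 = c*α - lam := by rw [hα]; linear_combination hs2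
  have hθ1' : (0:ℝ) < 1 - θ := by linarith
  -- first derivative
  have hExp : ∀ r : ℝ, 0 < r → HasDerivAt (fun x : ℝ => Real.exp (-α*x - β₈*x^(1-θ)))
      (Real.exp (-α*r - β₈*r^(1-θ)) * (-α - β₈*(1-θ)*r^(-θ))) r := by
    intro r hr
    have h0 : HasDerivAt (fun x : ℝ => x ^ (1-θ)) ((1-θ) * r ^ (1-θ-1)) r :=
      Real.hasDerivAt_rpow_const (Or.inl hr.ne')
    have h1 : HasDerivAt (fun x : ℝ => -α*x - β₈*x^(1-θ))
        (-α - β₈*((1-θ)*r^(1-θ-1))) r := by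
      have := ((hasDerivAt_id r).const_mul (-α)).sub (h0.const_mul β₈)
      exact this.congr_deriv (by ring)
    have h2 := h1.exp
    have he : (1:ℝ)-θ-1 = -θ := by ring
    rw [he] at h2
    convert h2 using 1
    ring
  have hderiv1 : ∀ r : ℝ, 0 < r → deriv (fun x : ℝ => Real.exp (-α*x - β₈*x^(1-θ))) r
      = Real.exp (-α*r - β₈*r^(1-θ)) * (-α - β₈*(1-θ)*r^(-θ)) := fun r hr => (hExp r hr).deriv
  have hderiv2 : ∀ r : ℝ, 0 < r →
      deriv (deriv (fun x : ℝ => Real.exp (-α*x - β₈*x^(1-θ)))) r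
      = Real.exp (-α*r - β₈*r^(1-θ)) *
        ((-α - β₈*(1-θ)*r^(-θ))^2 + β₈*(1-θ)*θ*r^(-θ-1)) := by
    intro r hr
    have heq : deriv (fun x : ℝ => Real.exp (-α*x - β₈*x^(1-θ)))
        =ᶠ[nhds r] fun x => Real.exp (-α*x - β₈*x^(1-θ)) * (-α - β₈*(1-θ)*x^(-θ)) :=
      Filter.eventuallyEq_of_mem (Ioi_mem_nhds hr) fun x hx => hderiv1 x hx
    rw [heq.deriv_eq]
    have h0 : HasDerivAt (fun x : ℝ => x ^ (-θ)) (-θ * r ^ (-θ-1)) r :=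
      Real.hasDerivAt_rpow_const (Or.inl hr.ne')
    have hg : HasDerivAt (fun x : ℝ => -α - β₈*(1-θ)*x^(-θ))
        (0 - β₈*(1-θ)*(-θ * r^(-θ-1))) r :=
      (hasDerivAt_const r (-α)).sub (h0.const_mul (β₈*(1-θ)))
    have hv := (hExp r hr).mul hg
    rw [HasDerivAt.deriv (f := fun x : ℝ => Real.exp (-α*x - β₈*x^(1-θ)) * (-α - β₈*(1-θ)*x^(-θ))) hv]
    ring
  set C := |((2*α - c)*(1-θ)*β₈ + ε)*(β₈*(1-θ)) - α*(β₈*(1-θ))^2| with hCdef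
  have htend : Filter.Tendsto
      (fun r : ℝ => C * r^(-θ) + (α*(β₈*(1-θ))*θ) * r⁻¹) Filter.atTop (nhds 0) := by
    have h1 := (tendsto_rpow_neg_atTop hθ0).const_mul C
    have h2 := tendsto_inv_atTop_zero.const_mul (α*(β₈*(1-θ))*θ)
    simpa using h1.add h2
  have hev : ∀ᶠ r in Filter.atTop,
      C * r^(-θ) + (α*(β₈*(1-θ))*θ) * r⁻¹ < ε*α :=
    htend.eventually_lt_const (mul_pos hε hαpos)
  obtain ⟨a, ha⟩ := Filter.eventually_atTop.mp (hev.and (Filter.eventually_gt_atTop 0))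
  refine ⟨max r₀ a, le_max_left _ _, fun r hr => ?_⟩
  have hrr₀ : r₀ ≤ r := le_trans (le_max_left _ _) hr
  obtain ⟨hbound, hr0⟩ := ha r (le_trans (le_max_right _ _) hr)
  have hval : (fun r : ℝ => Real.exp (-α*r - β₈*r^(1-θ))) r
      = Real.exp (-α*r - β₈*r^(1-θ)) := rfl
  rw [hderiv2 r hr0, hderiv1 r hr0, hval]
  have hs_eq : r ^ (-θ-1) = r ^ (-θ) * r⁻¹ := by
    rw [show (-θ-1 : ℝ) = -θ + (-1) by ring, Real.rpow_add hr0, Real.rpow_neg_one]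
  rw [hs_eq]
  set t := r ^ (-θ) with htdef
  set E := Real.exp (-α*r - β₈*r^(1-θ)) with hEdef
  have ht0 : 0 < t := Real.rpow_pos_of_pos hr0 _
  have hrθ : (0:ℝ) < r ^ θ := Real.rpow_pos_of_pos hr0 _
  have hrθ0 : (r:ℝ) ^ θ ≠ 0 := hrθ.ne'
  have hE : 0 < E := Real.exp_pos _
  have hm2 : c*α + ((2*α - c)*(1-θ)*β₈ + ε) * t ≤ α * m r := by
    have h := mul_le_mul_of_nonneg_left (hm r hrr₀) hαpos.le
    have heq2 : α * (c + ((2*α - c)*(1-θ)*β₈ + ε)/(α*r^θ))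
        = c*α + ((2*α - c)*(1-θ)*β₈ + ε) * t := by
      rw [htdef, Real.rpow_neg hr0.le]
      field_simp
    linarith [heq2 ▸ h]
  have hbpos : 0 < α + β₈*(1-θ)*t := by nlinarith [mul_pos (mul_pos hβ hθ1') ht0]
  have hmul : (c*α + ((2*α - c)*(1-θ)*β₈ + ε) * t) * (α + β₈*(1-θ)*t)
      ≤ (α * m r) * (α + β₈*(1-θ)*t) := mul_le_mul_of_nonneg_right hm2 hbpos.le
  have h1 : (C * t + (α*(β₈*(1-θ))*θ) * r⁻¹) * t < (ε*α) * t :=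
    mul_lt_mul_of_pos_right hbound ht0
  have h2 : -C * t^2 ≤ (((2*α - c)*(1-θ)*β₈ + ε)*(β₈*(1-θ)) - α*(β₈*(1-θ))^2) * t^2 := by
    have hna := neg_abs_le (((2*α - c)*(1-θ)*β₈ + ε)*(β₈*(1-θ)) - α*(β₈*(1-θ))^2)
    rw [← hCdef] at hna
    exact mul_le_mul_of_nonneg_right hna (sq_nonneg t)
  have hα3 : α^3 = c*α^2 - lam*α := by linear_combination α * hαeq
  have key2 : (c*α + ((2*α - c)*(1-θ)*β₈ + ε)*t)*(α + β₈*(1-θ)*t)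
      - α*(α + β₈*(1-θ)*t)^2 - α*(β₈*(1-θ))*θ*(t*r⁻¹) - α*lam
      = ε*α*t + (((2*α - c)*(1-θ)*β₈ + ε)*(β₈*(1-θ)) - α*(β₈*(1-θ))^2)*t^2
        - (α*(β₈*(1-θ))*θ) * r⁻¹ * t := by
    linear_combination (-α) * hαeq
  have key3 : 0 ≤ ε*α*t + (((2*α - c)*(1-θ)*β₈ + ε)*(β₈*(1-θ)) - α*(β₈*(1-θ))^2)*t^2
      - (α*(β₈*(1-θ))*θ) * r⁻¹ * t := by linarith [h1, h2]
  have hX : 0 ≤ α * (-((-α - β₈*(1-θ)*t)^2 + β₈*(1-θ)*θ*(t*r⁻¹))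
      + m r * (α + β₈*(1-θ)*t) - lam) := by
    linarith [hmul, key2, key3]
  have hX' : 0 ≤ -((-α - β₈*(1-θ)*t)^2 + β₈*(1-θ)*θ*(t*r⁻¹))
      + m r * (α + β₈*(1-θ)*t) - lam := by
    nlinarith [hX, hαpos]
  have hfinal : -(E * ((-α - β₈*(1-θ)*t)^2 + β₈*(1-θ)*θ*(t*r⁻¹)))
      - m r * (E * (-α - β₈*(1-θ)*t)) - lam * E
      = E * (-((-α - β₈*(1-θ)*t)^2 + β₈*(1-θ)*θ*(t*r⁻¹))
        + m r * (α + β₈*(1-θ)*t) - lam) := by ring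
  rw [hfinal]
  exact mul_nonneg hE.le hX'
end
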